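/- Let D ⊂ ℝⁿ be an open convex set and q : D → ℝ a C² function. Suppose there exists a map w : D → ℝⁿ such that for every x ∈ D the symmetric matrix q''(x) − q'(x)·w(x)ᵀ − w(x)·q'(x)ᵀ is positive definite. Then q is quasi-convex, i.e. q(λx + (1−λ)y) ≤ max(q(x), q(y)) for all x, y ∈ D and λ ∈ [0,1]. -/

import Mathlib

open Set Filter Topology

theorem stmt_5 {n : ℕ} (D : Set (EuclideanSpace ℝ (Fin n))) (hD : IsOpen D)
    (hDconv : Convex ℝ D) (q : EuclideanSpace ℝ (Fin n) → ℝ)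
    (hq : ContDiffOn ℝ 2 q D)
    (w : EuclideanSpace ℝ (Fin n) → EuclideanSpace ℝ (Fin n))
    (hpos : ∀ x ∈ D, ∀ h : EuclideanSpace ℝ (Fin n), h ≠ 0 →
      0 < iteratedFDeriv ℝ 2 q x (fun _ => h) - 2 * fderiv ℝ q x h * inner ℝ (w x) h) :
    ∀ x ∈ D, ∀ y ∈ D, ∀ lam : ℝ, lam ∈ Set.Icc (0:ℝ) 1 →
      q (lam • x + (1 - lam) • y) ≤ max (q x) (q y) := by
  intro x hx y hy lam hlam
  by_cases hxy : x = y
  · subst hxy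
    have hpt : lam • x + (1 - lam) • x = x := by module
    rw [hpt]; exact le_max_left _ _
  set h : EuclideanSpace ℝ (Fin n) := x - y with hh
  have hne : h ≠ 0 := sub_ne_zero.mpr hxy
  set c : ℝ → EuclideanSpace ℝ (Fin n) := fun t => y + t • h with hc
  have hcform : ∀ t : ℝ, c t = t • x + (1 - t) • y := by
    intro t; simp only [hc, hh]; module
  have hct : ∀ t ∈ Icc (0:ℝ) 1, c t ∈ D := by
    intro t ht
    rw [hcform t]
    exact hDconv hx hy ht.1 (by linarith [ht.2]) (by ring)
  have hccont : Continuous c := by fun_prop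
  set U : Set ℝ := c ⁻¹' D with hU
  have hUopen : IsOpen U := hD.preimage hccont
  have hIccU : Icc (0:ℝ) 1 ⊆ U := fun t ht => hct t ht
  set g : ℝ → ℝ := fun t => q (c t) with hg
  set g1 : ℝ → ℝ := fun t => fderiv ℝ q (c t) h with hg1def
  have hcder : ∀ t : ℝ, HasDerivAt c h t := by
    intro t
    have := ((hasDerivAt_id t).smul_const h).const_add y
    simp only [one_smul] at this
    exact this
  have hqd : ∀ t ∈ U, DifferentiableAt ℝ q (c t) := by
    intro t ht
    exact ((hq.differentiableOn (by norm_num)).differentiableAt (hD.mem_nhds ht))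
  have hgd : ∀ t ∈ U, HasDerivAt g (g1 t) t := by
    intro t ht
    exact ((hqd t ht).hasFDerivAt).comp_hasDerivAt t (hcder t)
  have hq' : ContDiffOn ℝ 1 (fderiv ℝ q) D := hq.fderiv_of_isOpen hD (by norm_num)
  have hg1d : ∀ t ∈ U, HasDerivAt g1 (fderiv ℝ (fderiv ℝ q) (c t) h h) t := by
    intro t ht
    have hd1 : DifferentiableAt ℝ (fderiv ℝ q) (c t) :=
      (hq'.differentiableOn one_ne_zero).differentiableAt (hD.mem_nhds ht)
    have h1 : HasDerivAt (fun s => fderiv ℝ q (c s)) (fderiv ℝ (fderiv ℝ q) (c t) h) t :=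
      (hd1.hasFDerivAt).comp_hasDerivAt t (hcder t)
    have h2 := ((ContinuousLinearMap.apply ℝ ℝ h).hasFDerivAt).comp_hasDerivAt t h1
    exact h2
  by_contra hcon
  push_neg at hcon
  have hglam : q (lam • x + (1 - lam) • y) = g lam := by
    rw [hg]; congr 1; rw [hcform lam]
  rw [hglam] at hcon
  have hgcont : ContinuousOn g (Icc (0:ℝ) 1) := by
    intro t ht
    exact ((hgd t (hIccU ht)).differentiableAt.continuousAt).continuousWithinAt
  obtain ⟨t0, ht0mem, ht0max⟩ :=
    isCompact_Icc.exists_isMaxOn (nonempty_Icc.mpr zero_le_one) hgcont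
  have hgt : max (q x) (q y) < g t0 := lt_of_lt_of_le hcon (ht0max hlam)
  have hg0 : g 0 = q y := by simp [hg, hc]
  have hg1v : g 1 = q x := by
    simp only [hg]; congr 1; rw [hcform 1]; module
  have ht0Ioo : t0 ∈ Ioo (0:ℝ) 1 := by
    rcases ht0mem.1.lt_or_eq with h0 | h0
    · rcases ht0mem.2.lt_or_eq with h1 | h1
      · exact ⟨h0, h1⟩
      · exfalso; rw [h1, hg1v] at hgt; exact absurd hgt (not_lt.mpr (le_max_left _ _))
    · exfalso; rw [← h0, hg0] at hgt; exact absurd hgt (not_lt.mpr (le_max_right _ _))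
  have ht0U : t0 ∈ U := hIccU ht0mem
  have hlocmax : IsLocalMax g t0 := by
    filter_upwards [isOpen_Ioo.mem_nhds ht0Ioo] with z hz
    exact ht0max (Ioo_subset_Icc_self hz)
  have hderiv0 : deriv g t0 = 0 := hlocmax.deriv_eq_zero
  have hd0 : g1 t0 = 0 := by rw [← (hgd t0 ht0U).deriv, hderiv0]
  have hK : 0 < fderiv ℝ (fderiv ℝ q) (c t0) h h := by
    have := hpos (c t0) (hct t0 ht0mem) h hne
    rw [iteratedFDeriv_two_apply] at this
    have hz : fderiv ℝ q (c t0) h = 0 := hd0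
    rw [hz] at this
    simpa using this
  -- g1 is positive just to the right of t0
  have hslope := hasDerivAt_iff_tendsto_slope.mp (hg1d t0 ht0U)
  have hev : ∀ᶠ z in 𝓝[≠] t0, 0 < slope g1 t0 z := hslope.eventually (eventually_gt_nhds hK)
  rw [eventually_nhdsWithin_iff] at hev
  obtain ⟨ε, hε, hball⟩ := Metric.eventually_nhds_iff.mp hev
  set t1 : ℝ := min (t0 + ε / 2) ((t0 + 1) / 2) with ht1
  have ht0t1 : t0 < t1 := by
    apply lt_min (by linarith) (by linarith [ht0Ioo.2])
  have ht1lt1 : t1 ≤ 1 := le_trans (min_le_right _ _) (by linarith [ht0Ioo.2])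
  have hsub : Icc t0 t1 ⊆ Icc (0:ℝ) 1 := by
    intro z hz
    exact ⟨le_trans ht0Ioo.1.le hz.1, le_trans hz.2 ht1lt1⟩
  have hg1pos : ∀ z ∈ Ioo t0 t1, 0 < g1 z := by
    intro z hz
    have hdist : dist z t0 < ε := by
      rw [Real.dist_eq, abs_of_pos (by linarith [hz.1])]
      have : z < t0 + ε / 2 := lt_of_lt_of_le hz.2 (min_le_left _ _)
      linarith
    have hzslope := hball hdist (by exact ne_of_gt hz.1)
    rw [slope_def_field, hd0] at hzslope
    have hzt0 : 0 < z - t0 := by linarith [hz.1]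
    have := hzslope
    rw [div_pos_iff] at this
    rcases this with ⟨hnum, _⟩ | ⟨_, hden⟩
    · simpa using hnum
    · linarith
  have hmon : StrictMonoOn g (Icc t0 t1) := by
    apply strictMonoOn_of_deriv_pos (convex_Icc _ _)
    · exact hgcont.mono hsub
    · intro z hz
      rw [interior_Icc] at hz
      rw [(hgd z (hIccU (hsub (Ioo_subset_Icc_self hz)))).deriv]
      exact hg1pos z hz
  have hlt : g t0 < g t1 :=
    hmon ⟨le_rfl, ht0t1.le⟩ ⟨ht0t1.le, le_rfl⟩ ht0t1
  have : g t1 ≤ g t0 := ht0max (hsub ⟨ht0t1.le, le_rfl⟩)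
  linarith
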